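/- If R is a triangular solution of the QYBE (R₂₁R₁₂ = 1), then the structure constants of the associated matrix braided-Lie algebra are trivial: c^{IJ}_K = δ^I δ^J_K, equivalently [χ^I, χ^J] = 0 on the shifted generators χ^I = u^I − δ^I. -/
import Mathlib


open Matrix

variable {k : Type*} [Field k] {n : ℕ}

/-- Pairs of indices, labelling a basis of `V ⊗ V` (or multi-indices `I = (i₀, i₁)`). -/
abbrev I2 (n : ℕ) := Fin n × Fin n

/-- Triples of indices, labelling a basis of `V ⊗ V ⊗ V`. -/
abbrev I3 (n : ℕ) := Fin n × Fin n × Fin n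

/-- `A₁₂ = A ⊗ id`, the lift of an operator on `V ⊗ V` to the first two factors of
`V ⊗ V ⊗ V`. -/
def amp12 (A : Matrix (I2 n) (I2 n) k) : Matrix (I3 n) (I3 n) k :=
  Matrix.of fun p q => A (p.1, p.2.1) (q.1, q.2.1) * (if p.2.2 = q.2.2 then 1 else 0)

/-- `A₁₃`, acting on the first and third factors of `V ⊗ V ⊗ V`. -/
def amp13 (A : Matrix (I2 n) (I2 n) k) : Matrix (I3 n) (I3 n) k :=
  Matrix.of fun p q => A (p.1, p.2.2) (q.1, q.2.2) * (if p.2.1 = q.2.1 then 1 else 0)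

/-- `A₂₃`, acting on the last two factors of `V ⊗ V ⊗ V`. -/
def amp23 (A : Matrix (I2 n) (I2 n) k) : Matrix (I3 n) (I3 n) k :=
  Matrix.of fun p q => A (p.2.1, p.2.2) (q.2.1, q.2.2) * (if p.1 = q.1 then 1 else 0)

/-- `A₂₁ = τ ∘ A ∘ τ`, conjugation by the flip of the two tensor factors. -/
def flipM (A : Matrix (I2 n) (I2 n) k) : Matrix (I2 n) (I2 n) k :=
  Matrix.of fun p q => A (p.2, p.1) (q.2, q.1)

/-- The quantum Yang–Baxter equation `R₁₂R₁₃R₂₃ = R₂₃R₁₃R₁₂`. -/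
def QYBE (R : Matrix (I2 n) (I2 n) k) : Prop :=
  amp12 R * amp13 R * amp23 R = amp23 R * amp13 R * amp12 R

/-- `Rtil` is the second inverse `R̃ = ((R^{t₂})⁻¹)^{t₂}` of `R`, characterized by
`R̃ⁱₐᵇₗ Rᵃⱼᵏᵦ = δⁱⱼ δᵏₗ = Rⁱₐᵇₗ R̃ᵃⱼᵏᵦ` (sum over `a`, `b`).  Here the entry
`R ((i,k),(j,l))` denotes `Rⁱⱼᵏₗ`. -/
def IsSecondInverse (R Rtil : Matrix (I2 n) (I2 n) k) : Prop :=
  (∀ i j kk l : Fin n, ∑ a, ∑ b, Rtil (i, b) (a, l) * R (a, kk) (j, b)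
      = (if i = j then (1 : k) else 0) * (if kk = l then 1 else 0)) ∧
  (∀ i j kk l : Fin n, ∑ a, ∑ b, R (i, b) (a, l) * Rtil (a, kk) (j, b)
      = (if i = j then (1 : k) else 0) * (if kk = l then 1 else 0))

/-- The structure constants
`c^{IJ}_K = R̃ᵃ_{i₁}{}^{j₀}_b R⁻¹{}ᵇ_{k₀}{}^{i₀}_c R^{k₁}_n{}ᶜ_m Rᵐₐ{}ⁿ_{j₁}`
of the matrix braided-Lie algebra associated to a bi-invertible R-matrix
(repeated indices summed). -/
def braidedC (R Rinv Rtil : Matrix (I2 n) (I2 n) k) (I J K : I2 n) : k :=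
  ∑ a, ∑ b, ∑ c, ∑ m, ∑ nn,
    Rtil (a, J.1) (I.2, b) * Rinv (b, I.1) (K.1, c) *
      R (K.2, c) (nn, m) * R (m, nn) (a, J.2)

/-- If `R` is a bi-invertible triangular solution of the QYBE (`R₂₁R₁₂ = 1`), then the
structure constants of the associated matrix braided-Lie algebra are trivial:
`c^{IJ}_K = δ^I δ^J_K`  (equivalently, `[χ^I, χ^J] = 0` on the shifted generators). -/
theorem triangular_trivial_bracket (R Rinv Rtil : Matrix (I2 n) (I2 n) k)
    (hYB : QYBE R) (htri : flipM R * R = 1)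
    (h1 : R * Rinv = 1) (h2 : Rinv * R = 1)
    (ht : IsSecondInverse R Rtil) :
    ∀ I J K : I2 n, braidedC R Rinv Rtil I J K
      = (if I.1 = I.2 then (1 : k) else 0) * (if J = K then 1 else 0) := by
  intro I J K
  -- From triangularity and invertibility, `Rinv = flipM R`.
  have hinv : Rinv = flipM R := by
    calc Rinv = 1 * Rinv := (one_mul _).symm
      _ = (flipM R * R) * Rinv := by rw [htri]
      _ = flipM R * (R * Rinv) := mul_assoc _ _ _
      _ = flipM R := by rw [h1, mul_one]
  -- The inner double sum over `m, nn` is an entry of `R * Rinv = 1`.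
  have key1 : ∀ c a : Fin n, (∑ m, ∑ nn, R (K.2, c) (nn, m) * R (m, nn) (a, J.2))
      = if (K.2 = J.2 ∧ c = a) then (1 : k) else 0 := by
    intro c a
    have h : (R * Rinv) (K.2, c) (J.2, a) = (1 : Matrix (I2 n) (I2 n) k) (K.2, c) (J.2, a) := by
      rw [h1]
    rw [Matrix.mul_apply] at h
    rw [Finset.sum_comm]
    calc (∑ nn, ∑ m, R (K.2, c) (nn, m) * R (m, nn) (a, J.2))
        = ∑ j : I2 n, R (K.2, c) j * Rinv j (J.2, a) := by
          rw [Fintype.sum_prod_type]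
          simp [hinv, flipM]
      _ = if (K.2 = J.2 ∧ c = a) then (1 : k) else 0 := by
          rw [h, Matrix.one_apply]
          by_cases hc : K.2 = J.2 ∧ c = a
          · simp [Prod.ext_iff, hc]
          · simp only [if_neg hc, ite_eq_right_iff]
            intro he
            exact absurd ⟨congrArg Prod.fst he, congrArg Prod.snd he⟩ hc
  have step1 : braidedC R Rinv Rtil I J K
      = ∑ a, ∑ b, ∑ c, Rtil (a, J.1) (I.2, b) * Rinv (b, I.1) (K.1, c) *
          (if (K.2 = J.2 ∧ c = a) then (1 : k) else 0) := by
    unfold braidedC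
    refine Finset.sum_congr rfl fun a _ => Finset.sum_congr rfl fun b _ =>
      Finset.sum_congr rfl fun c _ => ?_
    rw [← key1 c a, Finset.mul_sum]
    refine Finset.sum_congr rfl fun m _ => ?_
    rw [Finset.mul_sum]
    refine Finset.sum_congr rfl fun nn _ => ?_
    ring
  rw [step1]
  by_cases hKJ : K.2 = J.2
  · have step2 : (∑ a, ∑ b, ∑ c, Rtil (a, J.1) (I.2, b) * Rinv (b, I.1) (K.1, c) *
          (if (K.2 = J.2 ∧ c = a) then (1 : k) else 0))
        = ∑ a, ∑ b, R (I.1, b) (a, K.1) * Rtil (a, J.1) (I.2, b) := by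
      refine Finset.sum_congr rfl fun a _ => Finset.sum_congr rfl fun b _ => ?_
      simp only [hKJ, true_and]
      simp only [mul_ite, mul_one, mul_zero, Finset.sum_ite_eq', Finset.mem_univ, if_true]
      simp [hinv, flipM, mul_comm]
    rw [step2, ht.2 I.1 I.2 J.1 K.1]
    congr 1
    by_cases hJK : J = K
    · simp [hJK]
    · have : ¬ J.1 = K.1 := by
        intro h
        exact hJK (Prod.ext h hKJ.symm)
      simp [hJK, this]
  · have : (∑ a, ∑ b, ∑ c, Rtil (a, J.1) (I.2, b) * Rinv (b, I.1) (K.1, c) *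
          (if (K.2 = J.2 ∧ c = a) then (1 : k) else 0)) = 0 := by
      refine Finset.sum_eq_zero fun a _ => Finset.sum_eq_zero fun b _ =>
        Finset.sum_eq_zero fun c _ => ?_
      simp [hKJ]
    rw [this]
    have hJK : ¬ J = K := fun h => hKJ (by rw [h])
    simp [hJK]
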